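/- Consistency follows throughout a transitive closure set: let I be a type of clients, each client C holding a partial sequence P_C, and assume the comparability property that for every client C and all messages t, u ∈ P_C with seq t ≤ seq u, t is in the path of u. Fix n ≥ 1. Call two clients C and D adjacent if there is a message m ∈ P_C ∩ P_D with seq m > n, and let S be a set of clients such that any two clients of S are joined by a finite chain of adjacent clients within S, and such that some client of S holds a message of sequence number > n. Then there exists a total sequence T of length n such that for every client C ∈ S, the partial sequence P_C is consistent with T. -/
import Mathlib


/-- Iterate the parent map `n` times (in `Option`). -/
def parentIter {M : Type*} (parent : M → Option M) : ℕ → M → Option M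
  | 0, m => some m
  | n + 1, m => (parent m).bind (parentIter parent n)

/-- `p` is in the path of `u`. -/
def InPath {M : Type*} (seq : M → ℕ) (parent : M → Option M) (p u : M) : Prop :=
  seq p ≤ seq u ∧ parentIter parent (seq u - seq p) u = some p

/-- `L = (t_1, …, t_n)` is a total sequence (of length `L.length`). -/
def IsTotalSeq {M : Type*} (seq : M → ℕ) (parent : M → Option M) (L : List M) : Prop :=
  (∀ (i : ℕ) (h : i < L.length), seq L[i] = i + 1) ∧
  (∀ (i : ℕ) (h : i + 1 < L.length), parent L[i + 1] = some (L[i]'(by omega)))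

/-- A finite set of messages is a partial sequence if no two have the same seq number. -/
def IsPartialSeq {M : Type*} (seq : M → ℕ) (P : Finset M) : Prop :=
  ∀ p ∈ P, ∀ q ∈ P, seq p = seq q → p = q

/-- A partial sequence `P` is consistent with a total sequence `T`. -/
def ConsistentWith {M : Type*} (seq : M → ℕ) (P : Finset M) (T : List M) : Prop :=
  ∀ p ∈ P, seq p ≤ T.length → T[seq p - 1]? = some p


lemma parentIter_add {M : Type*} (parent : M → Option M) (a b : ℕ) (m : M) :
    parentIter parent (a + b) m = (parentIter parent a m).bind (parentIter parent b) := by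
  induction a generalizing m with
  | zero => simp [parentIter]
  | succ a ih =>
    have : a + 1 + b = (a + b) + 1 := by omega
    rw [this]
    show (parent m).bind (parentIter parent (a + b)) = _
    cases hp : parent m with
    | none => simp [parentIter, hp]
    | some q => simp [parentIter, hp, ih]

lemma parentIter_seq {M : Type*} (parent : M → Option M) {seq : M → ℕ}
    (hpar : ∀ x p, parent x = some p → seq x = seq p + 1)
    {k : ℕ} {m p : M} (h : parentIter parent k m = some p) :
    seq m = seq p + k := by
  induction k generalizing m with
  | zero => simp [parentIter] at h; simp [h]
  | succ k ih =>
    simp only [parentIter] at h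
    cases hp : parent m with
    | none => simp [hp] at h
    | some q =>
      rw [hp] at h
      simp only [Option.bind_some] at h
      have := hpar m q hp
      have := ih h
      omega

lemma parentIter_exists {M : Type*} (parent : M → Option M) {seq : M → ℕ}
    (hpar : ∀ x p, parent x = some p → seq x = seq p + 1)
    (hnone : ∀ x, parent x = none ↔ seq x = 1)
    {k : ℕ} {m : M} (hk : k < seq m) :
    ∃ p, parentIter parent k m = some p := by
  induction k generalizing m with
  | zero => exact ⟨m, rfl⟩
  | succ k ih =>
    cases hp : parent m with
    | none =>
      have := (hnone m).mp hp
      omega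
    | some q =>
      have hq := hpar m q hp
      obtain ⟨p, hpq⟩ := ih (m := q) (by omega)
      exact ⟨p, by simp [parentIter, hp, hpq]⟩

/-- transfer of ancestors along InPath -/
lemma anc_transfer {M : Type*} (parent : M → Option M) {seq : M → ℕ}
    {w u : M} (h : InPath seq parent w u) {k : ℕ} (hk : k + 1 ≤ seq w) :
    parentIter parent (seq u - (k + 1)) u = parentIter parent (seq w - (k + 1)) w := by
  obtain ⟨hle, hiter⟩ := h
  have harith : seq u - (k + 1) = (seq u - seq w) + (seq w - (k + 1)) := by omega
  rw [harith, parentIter_add, hiter, Option.bind_some]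

/-- Consistency follows throughout a transitive closure set. -/
theorem transitive_closure_consistent {M : Type*} (seq : M → ℕ) (parent : M → Option M)
    (hseq : ∀ m, 1 ≤ seq m)
    (hpar : ∀ x p, parent x = some p → seq x = seq p + 1)
    (hnone : ∀ x, parent x = none ↔ seq x = 1)
    {I : Type*} (P : I → Finset M)
    (hpartial : ∀ C, IsPartialSeq seq (P C))
    (hcomp : ∀ C, ∀ t ∈ P C, ∀ u ∈ P C, seq t ≤ seq u → InPath seq parent t u)
    (n : ℕ) (hn : 1 ≤ n)
    (S : Set I)
    (hchain : ∀ C ∈ S, ∀ D ∈ S,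
      Relation.ReflTransGen
        (fun A B => A ∈ S ∧ B ∈ S ∧ ∃ m, m ∈ P A ∧ m ∈ P B ∧ n < seq m) C D)
    (hsome : ∃ C ∈ S, ∃ m ∈ P C, n < seq m) :
    ∃ T : List M, IsTotalSeq seq parent T ∧ T.length = n ∧
      ∀ C ∈ S, ConsistentWith seq (P C) T := by

  classical
  obtain ⟨C₀, hC₀, m₀, hm₀P, hm₀⟩ := hsome
  set s := seq m₀ with hs
  have hex : ∀ i : Fin n, ∃ p, parentIter parent (s - (i.1 + 1)) m₀ = some p := by
    intro i
    exact parentIter_exists parent hpar hnone (by omega)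
  let f : Fin n → M := fun i => Classical.choose (hex i)
  have hf : ∀ i : Fin n, parentIter parent (s - (i.1 + 1)) m₀ = some (f i) := fun i =>
    Classical.choose_spec (hex i)
  have hfseq : ∀ i : Fin n, seq (f i) = i.1 + 1 := by
    intro i
    have := parentIter_seq parent hpar (hf i)
    have : s = seq (f i) + (s - (i.1 + 1)) := this
    omega
  refine ⟨List.ofFn f, ⟨?_, ?_⟩, by simp, ?_⟩
  · intro i h
    simp only [List.length_ofFn] at h
    rw [List.getElem_ofFn]
    exact hfseq ⟨i, h⟩
  · intro i h
    simp only [List.length_ofFn] at h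
    rw [List.getElem_ofFn, List.getElem_ofFn]
    -- f ⟨i+1⟩ is ancestor at depth s - (i+2); f ⟨i⟩ at depth s - (i+1) = that +1
    have h1 := hf ⟨i + 1, h⟩
    have h2 := hf ⟨i, by omega⟩
    have harith : s - (i + 1) = (s - (i + 2)) + 1 := by omega
    rw [harith, parentIter_add] at h2
    simp only at h1 h2
    rw [h1, Option.bind_some] at h2
    simpa [parentIter] using h2
  · -- consistency
    -- Good D: every high message in P D has ancestors = f
    have key : ∀ D ∈ S, ∀ u ∈ P D, n < seq u → ∀ i : Fin n,
        parentIter parent (seq u - (i.1 + 1)) u = some (f i) := by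
      have transfer : ∀ (A : I), ∀ v ∈ P A, ∀ u ∈ P A, n < seq v → n < seq u →
          (∀ i : Fin n, parentIter parent (seq v - (i.1 + 1)) v = some (f i)) →
          (∀ i : Fin n, parentIter parent (seq u - (i.1 + 1)) u = some (f i)) := by
        intro A v hv u hu hnv hnu hanc i
        rcases le_or_gt (seq v) (seq u) with hle | hlt
        · have hip := hcomp A v hv u hu hle
          rw [anc_transfer parent (seq := seq) hip (by omega)]
          exact hanc i
        · have hip := hcomp A u hu v hv (le_of_lt hlt)
          have := anc_transfer parent (seq := seq) hip (k := i.1) (by omega)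
          rw [← this]
          exact hanc i
      intro D hD
      have hchain' := hchain C₀ hC₀ D hD
      induction hchain' with
      | refl =>
        intro u hu hnu i
        refine transfer C₀ m₀ hm₀P u hu hm₀ hnu (fun j => hf j) i
      | tail hAB hBD ih =>
        obtain ⟨hB, hD', m', hm'B, hm'D, hnm'⟩ := hBD
        intro u hu hnu i
        have hanc' : ∀ j : Fin n, parentIter parent (seq m' - (j.1 + 1)) m' = some (f j) :=
          ih hB m' hm'B hnm'
        exact transfer _ m' hm'D u hu hnm' hnu hanc' i
    intro D hD p hpD hple
    simp only [List.length_ofFn] at hple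
    -- find a high message in P D
    have hhigh : ∃ u ∈ P D, n < seq u := by
      have hchain' := hchain C₀ hC₀ D hD
      rcases (Relation.ReflTransGen.cases_tail hchain') with heq | ⟨B, _, hBD⟩
      · exact ⟨m₀, heq ▸ hm₀P, hm₀⟩
      · obtain ⟨_, _, m', _, hm'D, hnm'⟩ := hBD
        exact ⟨m', hm'D, hnm'⟩
    obtain ⟨u, huD, hnu⟩ := hhigh
    have hps := hseq p
    have hip := hcomp D p hpD u huD (by omega)
    have h1 := hip.2
    have h2 := key D hD u huD hnu ⟨seq p - 1, by omega⟩
    have hk1 : seq p - 1 + 1 = seq p := by omega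
    rw [hk1] at h2
    rw [h1] at h2
    have hpe : p = f ⟨seq p - 1, by omega⟩ := by
      exact Option.some_injective _ h2
    have hlen : seq p - 1 < (List.ofFn f).length := by simp; omega
    rw [List.getElem?_eq_getElem hlen, List.getElem_ofFn]
    exact congrArg some hpe.symm
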